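/- Suppose S and S' are depictions of R and q ∈ Z_{S/R}. Then there exists a unique prime ideal q' of S' such that q' ∩ R = q ∩ R; moreover q' ∈ Z_{S'/R} and the height of q' in S' equals the height of q in S. -/

import Mathlib

/-! Common framework: depictions of nonnoetherian integral domains (Beil).
`K` plays the role of the fraction field `Frac R`; all rings are `k`-subalgebras of `K`. -/

section Depictions

variable {k K : Type*} [Field k] [Field K] [Algebra k K]

/-- The localization `A_p` of a subalgebra `A ⊆ K` at a prime ideal `p`,
viewed as a subalgebra of `K`. -/
def locAt (A : Subalgebra k K) (p : Ideal A) (hp : p.IsPrime) : Subalgebra k K where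
  carrier := {x : K | ∃ a s : A, s ∉ p ∧ x * (s : K) = (a : K)}
  one_mem' := ⟨1, 1, (Ideal.ne_top_iff_one p).mp hp.ne_top, by simp⟩
  zero_mem' := ⟨0, 1, (Ideal.ne_top_iff_one p).mp hp.ne_top, by simp⟩
  mul_mem' := by
    rintro x y ⟨a, s, hs, hx⟩ ⟨b, t, ht, hy⟩
    refine ⟨a * b, s * t, fun h => ((hp.mem_or_mem h).elim hs ht), ?_⟩
    have : x * y * ((s : K) * (t : K)) = (x * s) * (y * t) := by ring
    push_cast
    rw [this, hx, hy]
  add_mem' := by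
    rintro x y ⟨a, s, hs, hx⟩ ⟨b, t, ht, hy⟩
    refine ⟨a * t + b * s, s * t, fun h => ((hp.mem_or_mem h).elim hs ht), ?_⟩
    have : (x + y) * ((s : K) * (t : K)) = (x * s) * t + (y * t) * s := by ring
    push_cast
    rw [this, hx, hy]
  algebraMap_mem' := fun c =>
    ⟨algebraMap k A c, 1, (Ideal.ne_top_iff_one p).mp hp.ne_top, by simp⟩

lemma mem_locAt {A : Subalgebra k K} {p : Ideal A} {hp : p.IsPrime} {x : K} :
    x ∈ locAt A p hp ↔ ∃ a s : A, s ∉ p ∧ x * (s : K) = (a : K) := Iff.rfl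

/-- `n ∈ U_{S/R}`: `n` is a maximal ideal of `S` with `R_{n ∩ R} = S_n`. -/
def memU (R S : Subalgebra k K) (h : R ≤ S) (n : Ideal S) : Prop :=
  ∃ hn : n.IsMaximal,
    locAt R (n.comap (Subalgebra.inclusion h)) (hn.isPrime.comap _) = locAt S n hn.isPrime

/-- `q ∈ Z_{S/R}`: `q` is a prime of `S` whose zero locus meets `U_{S/R}`,
i.e. some `n ∈ U_{S/R}` contains `q`. -/
def memZ (R S : Subalgebra k K) (h : R ≤ S) (q : Ideal S) : Prop :=
  q.IsPrime ∧ ∃ n : Ideal S, memU R S h n ∧ q ≤ n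

/-- `S` is a depiction of `R`. -/
structure IsDepiction (R S : Subalgebra k K) : Prop where
  le : R ≤ S
  fg : S.FG
  specSurj : ∀ p : Ideal R, p.IsPrime →
    ∃ q : Ideal S, q.IsPrime ∧ q.comap (Subalgebra.inclusion le) = p
  memU_iff : ∀ (n : Ideal S) (hn : n.IsMaximal),
    memU R S le n ↔
      IsNoetherianRing (locAt R (n.comap (Subalgebra.inclusion le)) (hn.isPrime.comap _))
  nonempty : ∃ n : Ideal S, memU R S le n

/-- The height of an ideal `q`, as the Krull dimension of the set of primes contained in `q`. -/
noncomputable def htOf {A : Type*} [CommRing A] (q : Ideal A) : WithBot ℕ∞ :=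
  Order.krullDim {p : PrimeSpectrum A // p.asIdeal ≤ q}

/-- The geometric height of a prime `p` of `R`: the minimum of the heights `ht_S q` over all
depictions `S` of `R` and primes `q` of `S` with `q ∩ R = p`. -/
noncomputable def ght (R : Subalgebra k K) (p : Ideal R) : WithBot ℕ∞ :=
  sInf {h | ∃ (S : Subalgebra k K) (hd : IsDepiction R S) (q : Ideal S),
    q.IsPrime ∧ q.comap (Subalgebra.inclusion hd.le) = p ∧ h = htOf q}

/-- The geometric dimension of a prime `p` of `R`: `gdim p = dim R - ght p`. -/
noncomputable def gdim (R : Subalgebra k K) (p : Ideal R) : WithBot ℕ∞ :=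
  Option.map₂ (· - ·) (ringKrullDim ↥R) (ght R p)

/-- `T := ⋂_{n ∈ U_{S/R}} S_n`, as a subalgebra of `K`. -/
noncomputable def depT (R S : Subalgebra k K) (h : R ≤ S) : Subalgebra k K :=
  sInf {L | ∃ (n : Ideal S) (hn : n.IsMaximal), memU R S h n ∧ L = locAt S n hn.isPrime}

lemma le_depT (R S : Subalgebra k K) (h : R ≤ S) : S ≤ depT R S h := by
  refine le_sInf ?_
  rintro L ⟨n, hn, -, rfl⟩
  intro x hx
  exact ⟨⟨x, hx⟩, 1, (Ideal.ne_top_iff_one n).mp hn.ne_top, by simp⟩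

/-- A depiction `S` of `R` witnesses `noetherian in codimension 1`:
every height 1 prime of `S` lies in `Z_{S/R}`. -/
def Witnessing (R S : Subalgebra k K) (h : R ≤ S) : Prop :=
  ∀ q : Ideal S, q.IsPrime → htOf q = 1 → memZ R S h q

/-- `R` is noetherian in codimension 1. -/
def NoethCodimOne (R : Subalgebra k K) : Prop :=
  ∃ (S : Subalgebra k K) (hd : IsDepiction R S), Witnessing R S hd.le

/-- A depiction `S` of `R` is saturated if `ght (q ∩ R) = ht_S q` for every prime `q` of `S`
minimal over `(q ∩ R)S`. -/
def IsSaturated (R S : Subalgebra k K) (h : R ≤ S) : Prop :=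
  ∀ q : Ideal S,
    q ∈ (Ideal.map (Subalgebra.inclusion h) (q.comap (Subalgebra.inclusion h))).minimalPrimes →
      ght R (q.comap (Subalgebra.inclusion h)) = htOf q

/-- The subalgebra `k + p ⊆ K`, for `p` an ideal of a subalgebra `S ⊆ K`. -/
def kPlus (S : Subalgebra k K) (p : Ideal S) : Subalgebra k K where
  carrier := {x : K | ∃ (c : k) (f : S), f ∈ p ∧ x = algebraMap k K c + (f : K)}
  one_mem' := ⟨1, 0, p.zero_mem, by simp⟩
  zero_mem' := ⟨0, 0, p.zero_mem, by simp⟩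
  mul_mem' := by
    rintro x y ⟨c, f, hf, rfl⟩ ⟨d, g, hg, rfl⟩
    refine ⟨c * d, algebraMap k S c * g + algebraMap k S d * f + f * g,
      add_mem (add_mem (p.mul_mem_left _ hg) (p.mul_mem_left _ hf)) (p.mul_mem_left _ hg),
      ?_⟩
    push_cast
    ring
  add_mem' := by
    rintro x y ⟨c, f, hf, rfl⟩ ⟨d, g, hg, rfl⟩
    exact ⟨c + d, f + g, add_mem hf hg, by push_cast; ring⟩
  algebraMap_mem' := fun c => ⟨c, 0, p.zero_mem, by simp⟩

lemma kPlus_le (S : Subalgebra k K) (p : Ideal S) : kPlus S p ≤ S := by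
  rintro x ⟨c, f, hf, rfl⟩
  exact add_mem (S.algebraMap_mem c) f.2

end Depictions

section Aux

variable {k K : Type*} [Field k] [Field K] [Algebra k K]

lemma locAt_congr {A : Subalgebra k K} {p p' : Ideal A} (hp : p.IsPrime) (hp' : p'.IsPrime)
    (e : p = p') : locAt A p hp = locAt A p' hp' := by subst e; rfl

/-- `S ⊆ R_m` as subsets of `K`. -/
def LocCond (R S : Subalgebra k K) (m : Ideal ↥R) : Prop :=
  ∀ x : ↥S, ∃ b t : ↥R, t ∉ m ∧ (x : K) * (t : K) = (b : K)

variable {R S : Subalgebra k K}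

/-- The contraction to `S` of the extension of `p₁` to `R_m = S_n`. -/
def extIdeal (m : Ideal ↥R) (hm : m.IsPrime) (hloc : LocCond R S m) (p₁ : Ideal ↥R) :
    Ideal ↥S where
  carrier := {x : ↥S | ∃ a s : ↥R, a ∈ p₁ ∧ s ∉ m ∧ (x : K) * (s : K) = (a : K)}
  zero_mem' := ⟨0, 1, p₁.zero_mem, (Ideal.ne_top_iff_one m).mp hm.ne_top, by simp⟩
  add_mem' := by
    rintro x y ⟨a, s, ha, hs, hx⟩ ⟨b, t, hb, ht, hy⟩
    refine ⟨a * t + b * s, s * t,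
      Ideal.add_mem _ (p₁.mul_mem_right _ ha) (p₁.mul_mem_right _ hb),
      fun hc => (hm.mem_or_mem hc).elim hs ht, ?_⟩
    push_cast
    linear_combination (t : K) * hx + (s : K) * hy
  smul_mem' := by
    rintro c x ⟨a, s, ha, hs, hx⟩
    obtain ⟨b, t, ht, hc⟩ := hloc c
    simp only [smul_eq_mul]
    refine ⟨b * a, t * s, p₁.mul_mem_left b ha,
      fun hc' => (hm.mem_or_mem hc').elim ht hs, ?_⟩
    push_cast
    linear_combination ((x : K) * (s : K)) * hc + (b : K) * hx

lemma mem_extIdeal {m : Ideal ↥R} {hm : m.IsPrime} {hloc : LocCond R S m} {p₁ : Ideal ↥R}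
    {x : ↥S} :
    x ∈ extIdeal m hm hloc p₁ ↔ ∃ a s : ↥R, a ∈ p₁ ∧ s ∉ m ∧ (x : K) * (s : K) = (a : K) :=
  Iff.rfl

variable (h : R ≤ S) (m : Ideal ↥R) (hm : m.IsPrime) (hloc : LocCond R S m)

lemma comap_extIdeal {p₁ : Ideal ↥R} (hp₁ : p₁.IsPrime) (hpm : p₁ ≤ m) :
    (extIdeal m hm hloc p₁).comap (Subalgebra.inclusion h) = p₁ := by
  ext r
  simp only [Ideal.mem_comap]
  constructor
  · rintro ⟨a, s, ha, hs, hx⟩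
    have h1 : (r : K) * (s : K) = (a : K) := by
      rwa [Subalgebra.coe_inclusion] at hx
    have h2 : r * s = a := Subtype.ext (by push_cast; exact h1)
    have h3 : r * s ∈ p₁ := h2 ▸ ha
    exact (hp₁.mem_or_mem h3).resolve_right (fun hc => hs (hpm hc))
  · intro hr
    exact ⟨r, 1, hr, (Ideal.ne_top_iff_one m).mp hm.ne_top, by simp⟩

lemma extIdeal_le {p₁ : Ideal ↥R} {Q : Ideal ↥S} (hQ : Q.IsPrime)
    (h1 : p₁ ≤ Q.comap (Subalgebra.inclusion h)) (h2 : Q.comap (Subalgebra.inclusion h) ≤ m) :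
    extIdeal m hm hloc p₁ ≤ Q := by
  rintro x ⟨a, s, ha, hs, hx⟩
  have hsQ : Subalgebra.inclusion h s ∉ Q := fun c => hs (h2 c)
  have haQ : Subalgebra.inclusion h a ∈ Q := h1 ha
  have hmul : x * Subalgebra.inclusion h s = Subalgebra.inclusion h a :=
    Subtype.ext (by simpa [Subalgebra.coe_inclusion] using hx)
  have : x * Subalgebra.inclusion h s ∈ Q := hmul ▸ haQ
  exact (hQ.mem_or_mem this).resolve_right hsQ

lemma le_extIdeal (Q : Ideal ↥S) :
    Q ≤ extIdeal m hm hloc (Q.comap (Subalgebra.inclusion h)) := by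
  intro x hx
  obtain ⟨b, t, ht, hxt⟩ := hloc x
  refine ⟨b, t, ?_, ht, hxt⟩
  show Subalgebra.inclusion h b ∈ Q
  have hmul : Subalgebra.inclusion h b = x * Subalgebra.inclusion h t :=
    Subtype.ext (by simp [Subalgebra.coe_inclusion, ← hxt])
  rw [hmul]
  exact Q.mul_mem_right _ hx

lemma extIdeal_isPrime {p₁ : Ideal ↥R} (hp₁ : p₁.IsPrime) (hpm : p₁ ≤ m) :
    (extIdeal m hm hloc p₁).IsPrime := by
  constructor
  · intro htop
    have h1 : (1 : ↥S) ∈ extIdeal m hm hloc p₁ := htop ▸ Submodule.mem_top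
    obtain ⟨a, s, ha, hs, hx⟩ := h1
    have : s = a := Subtype.ext (by simpa using hx)
    exact hs (hpm (this ▸ ha))
  · rintro x y ⟨a, s, ha, hs, hxy⟩
    obtain ⟨b, t, ht, hx⟩ := hloc x
    obtain ⟨c, u, hu, hy⟩ := hloc y
    push_cast at hxy
    have key : a * (t * u) = (b * c) * s := Subtype.ext (by
      push_cast
      linear_combination (-((t:K) * (u:K))) * hxy + ((y:K) * (u:K) * (s:K)) * hx
        + ((b:K) * (s:K)) * hy)
    have h1 : a * (t * u) ∈ p₁ := p₁.mul_mem_right _ ha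
    rw [key] at h1
    have hbc : b * c ∈ p₁ :=
      (hp₁.mem_or_mem h1).resolve_right (fun hc => hs (hpm hc))
    rcases hp₁.mem_or_mem hbc with hb | hc
    · exact Or.inl ⟨b, t, hb, ht, hx⟩
    · exact Or.inr ⟨c, u, hc, hu, hy⟩

lemma extIdeal_mono {p₁ p₂ : Ideal ↥R} (hp : p₁ ≤ p₂) :
    extIdeal m hm hloc p₁ ≤ extIdeal m hm hloc p₂ := by
  rintro x ⟨a, s, ha, hs, hx⟩
  exact ⟨a, s, hp ha, hs, hx⟩

lemma extIdeal_comap_self {Q : Ideal ↥S} (hQ : Q.IsPrime)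
    (h2 : Q.comap (Subalgebra.inclusion h) ≤ m) :
    extIdeal m hm hloc (Q.comap (Subalgebra.inclusion h)) = Q :=
  le_antisymm (extIdeal_le h m hm hloc hQ le_rfl h2) (le_extIdeal h m hm hloc Q)

/-- The key order isomorphism between primes below `q` and primes below `q ∩ R`. -/
noncomputable def primeIso {q : Ideal ↥S} (hq : q.IsPrime)
    (hqm : q.comap (Subalgebra.inclusion h) ≤ m) :
    {P : PrimeSpectrum ↥S // P.asIdeal ≤ q} ≃o
      {P : PrimeSpectrum ↥R // P.asIdeal ≤ q.comap (Subalgebra.inclusion h)} := by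
  refine Equiv.toOrderIso
    ⟨fun P => ⟨⟨P.1.asIdeal.comap (Subalgebra.inclusion h), P.1.2.comap _⟩,
        Ideal.comap_mono P.2⟩,
      fun p₁ => ⟨⟨extIdeal m hm hloc p₁.1.asIdeal,
          extIdeal_isPrime m hm hloc p₁.1.2 (p₁.2.trans hqm)⟩,
        (extIdeal_le h m hm hloc hq p₁.2 hqm)⟩,
      fun P => ?_, fun p₁ => ?_⟩ ?_ ?_
  · apply Subtype.ext
    apply PrimeSpectrum.ext
    exact extIdeal_comap_self h m hm hloc P.1.2 ((Ideal.comap_mono P.2).trans hqm)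
  · apply Subtype.ext
    apply PrimeSpectrum.ext
    exact comap_extIdeal h m hm hloc p₁.1.2 (p₁.2.trans hqm)
  · rintro ⟨P₁, h₁⟩ ⟨P₂, h₂⟩ hle
    exact Ideal.comap_mono hle
  · rintro ⟨p₁, h₁⟩ ⟨p₂, h₂⟩ hle
    exact extIdeal_mono m hm hloc hle

end Aux

set_option maxHeartbeats 1000000 in
lemma comap_isMaximal_of_fg {k K : Type*} [Field k] [IsAlgClosed k] [Field K] [Algebra k K]
    {R S : Subalgebra k K} (h : R ≤ S) (hfg : S.FG)
    (n : Ideal ↥S) (hn : n.IsMaximal) :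
    (n.comap (Subalgebra.inclusion h)).IsMaximal := by
  haveI := hn
  haveI := hn.isPrime
  have hFT : Algebra.FiniteType k ↥S := (Subalgebra.fg_iff_finiteType S).mp hfg
  obtain ⟨nn, f, hfsurj⟩ := Algebra.FiniteType.iff_quotient_mvPolynomial''.mp hFT
  set P : Ideal (MvPolynomial (Fin nn) k) := n.comap f.toRingHom with hP_def
  haveI hP : P.IsMaximal := Ideal.comap_isMaximal_of_surjective f.toRingHom hfsurj
  have hint : ((Ideal.Quotient.mk P).comp MvPolynomial.C).IsIntegral :=
    MvPolynomial.quotient_mk_comp_C_isIntegral_of_isJacobsonRing P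
  set φ : MvPolynomial (Fin nn) k ⧸ P →+* ↥S ⧸ n :=
    Ideal.quotientMap n f.toRingHom le_rfl with hφ_def
  have hφsurj : Function.Surjective φ := Ideal.quotientMap_surjective hfsurj
  have hcomp : algebraMap k (↥S ⧸ n) = φ.comp ((Ideal.Quotient.mk P).comp MvPolynomial.C) := by
    refine RingHom.ext fun c => ?_
    show algebraMap k (↥S ⧸ n) c = φ (Ideal.Quotient.mk P (MvPolynomial.C c))
    rw [hφ_def, Ideal.quotientMap_mk]
    have : f.toRingHom (MvPolynomial.C c) = algebraMap k ↥S c := f.commutes c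
    rw [this, Ideal.Quotient.mk_algebraMap]
  have hintS : (algebraMap k (↥S ⧸ n)).IsIntegral := by
    rw [hcomp]
    exact RingHom.IsIntegral.trans _ _ hint (RingHom.isIntegral_of_surjective φ hφsurj)
  have hsurj : Function.Surjective (algebraMap k (↥S ⧸ n)) :=
    (IsAlgClosed.ringHom_bijective_of_isIntegral _ hintS).2
  refine ⟨⟨(hn.isPrime.comap (Subalgebra.inclusion h)).ne_top, fun J hJ => ?_⟩⟩
  obtain ⟨r, hrJ, hrm⟩ := SetLike.exists_of_lt hJ
  obtain ⟨c, hc⟩ := hsurj (Ideal.Quotient.mk n (Subalgebra.inclusion h r))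
  have hc0 : c ≠ 0 := by
    rintro rfl
    apply hrm
    show Subalgebra.inclusion h r ∈ n
    exact Ideal.Quotient.eq_zero_iff_mem.mp (by rw [← hc, map_zero])
  have hmem : r - algebraMap k ↥R c ∈ n.comap (Subalgebra.inclusion h) := by
    show Subalgebra.inclusion h (r - algebraMap k ↥R c) ∈ n
    have hincl : Subalgebra.inclusion h (r - algebraMap k ↥R c)
        = Subalgebra.inclusion h r - algebraMap k ↥S c := Subtype.ext (by simp)
    rw [hincl]
    refine (Ideal.Quotient.eq (I := n)).mp ?_
    rw [Ideal.Quotient.mk_algebraMap, ← hc]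
  have hcJ : algebraMap k ↥R c ∈ J := by
    have h1 := J.sub_mem hrJ (hJ.le hmem)
    simpa using h1
  exact Ideal.eq_top_of_isUnit_mem J hcJ
    ((isUnit_iff_ne_zero.mpr hc0).map (algebraMap k ↥R))


/-- If `S`, `S'` are depictions of `R` and `q ∈ Z_{S/R}`, then there is a unique prime `q'`
of `S'` with `q' ∩ R = q ∩ R`; moreover `q' ∈ Z_{S'/R}` and `ht_{S'} q' = ht_S q`. -/
theorem unique_prime_over_of_memZ (k K : Type*) [Field k] [IsAlgClosed k] [Field K] [Algebra k K]
    (R : Subalgebra k K) (hfrac : IsFractionRing ↥R K)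
    (S S' : Subalgebra k K) (hS : IsDepiction R S) (hS' : IsDepiction R S')
    (q : Ideal S) (hq : memZ R S hS.le q) :
    ∃ q' : Ideal S',
      (q'.IsPrime ∧
        q'.comap (Subalgebra.inclusion hS'.le) = q.comap (Subalgebra.inclusion hS.le)) ∧
      (∀ q'' : Ideal S', q''.IsPrime →
        q''.comap (Subalgebra.inclusion hS'.le) = q.comap (Subalgebra.inclusion hS.le) →
        q'' = q') ∧
      memZ R S' hS'.le q' ∧ htOf q' = htOf q := by
  obtain ⟨hqp, n, hUmem, hqn⟩ := hq
  obtain ⟨hn, hUn⟩ := hUmem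
  set m : Ideal ↥R := n.comap (Subalgebra.inclusion hS.le) with hm_def
  have hmp : m.IsPrime := hn.isPrime.comap _
  set p₀ : Ideal ↥R := q.comap (Subalgebra.inclusion hS.le) with hp₀_def
  have hp₀p : p₀.IsPrime := hqp.comap _
  have hp₀m : p₀ ≤ m := Ideal.comap_mono hqn
  -- `S ⊆ R_m`
  have hlocS : LocCond R S m := by
    intro x
    have hx : (x : K) ∈ locAt S n hn.isPrime :=
      ⟨x, 1, (Ideal.ne_top_iff_one n).mp hn.isPrime.ne_top, by simp⟩
    rw [← hUn] at hx
    obtain ⟨a, s, hs, hxs⟩ := hx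
    exact ⟨a, s, hs, hxs⟩
  -- `R_m` is noetherian
  have hnoeth : IsNoetherianRing (locAt R m hmp) := (hS.memU_iff n hn).mp ⟨hn, hUn⟩
  -- `m` is maximal
  have hmmax : m.IsMaximal := comap_isMaximal_of_fg hS.le hS.fg n hn
  -- find a maximal ideal `n'` of `S'` over `m`
  obtain ⟨q₀', hq₀'p, hq₀'c⟩ := hS'.specSurj m hmp
  obtain ⟨n', hn'max, hq₀n'⟩ := q₀'.exists_le_maximal hq₀'p.ne_top
  have hn'c : n'.comap (Subalgebra.inclusion hS'.le) = m := by
    have h1 : m ≤ n'.comap (Subalgebra.inclusion hS'.le) := by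
      rw [← hq₀'c]; exact Ideal.comap_mono hq₀n'
    exact (hmmax.eq_of_le (hn'max.isPrime.comap _).ne_top h1).symm
  -- `n' ∈ U_{S'/R}`
  have hUn' : memU R S' hS'.le n' := by
    refine (hS'.memU_iff n' hn'max).mpr ?_
    rw [locAt_congr (hn'max.isPrime.comap _) hmp hn'c]
    exact hnoeth
  obtain ⟨hn'max', hUn'eq⟩ := hUn'
  have hUn'eq : locAt R m hmp = locAt S' n' hn'max.isPrime := by
    rw [← locAt_congr (hn'max.isPrime.comap _) hmp hn'c]
    exact hUn'eq
  -- `S' ⊆ R_m`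
  have hlocS' : LocCond R S' m := by
    intro x
    have hx : (x : K) ∈ locAt S' n' hn'max.isPrime :=
      ⟨x, 1, (Ideal.ne_top_iff_one n').mp hn'max.isPrime.ne_top, by simp⟩
    rw [← hUn'eq] at hx
    obtain ⟨a, s, hs, hxs⟩ := hx
    exact ⟨a, s, hs, hxs⟩
  -- the candidate prime
  refine ⟨extIdeal m hmp hlocS' p₀, ⟨extIdeal_isPrime m hmp hlocS' hp₀p hp₀m,
    comap_extIdeal hS'.le m hmp hlocS' hp₀p hp₀m⟩, ?_, ?_, ?_⟩
  · -- uniqueness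
    intro q'' hq''p hq''c
    have h1 : q'' ≤ extIdeal m hmp hlocS' p₀ := by
      have := le_extIdeal hS'.le m hmp hlocS' q''
      rwa [hq''c] at this
    have h2 : extIdeal m hmp hlocS' p₀ ≤ q'' :=
      extIdeal_le hS'.le m hmp hlocS' hq''p (le_of_eq hq''c.symm) (hq''c.le.trans hp₀m)
    exact le_antisymm h1 h2
  · -- memZ
    refine ⟨extIdeal_isPrime m hmp hlocS' hp₀p hp₀m, n', ⟨hn'max, ?_⟩, ?_⟩
    · rw [locAt_congr (hn'max.isPrime.comap _) hmp hn'c]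
      exact hUn'eq
    · exact extIdeal_le hS'.le m hmp hlocS' hn'max.isPrime (hn'c ▸ hp₀m) (le_of_eq hn'c)
  · -- heights
    have hq'c : (extIdeal m hmp hlocS' p₀).comap (Subalgebra.inclusion hS'.le) = p₀ :=
      comap_extIdeal hS'.le m hmp hlocS' hp₀p hp₀m
    have e1 := Order.krullDim_eq_of_orderIso
      (primeIso hS'.le m hmp hlocS' (extIdeal_isPrime m hmp hlocS' hp₀p hp₀m)
        (hq'c.le.trans hp₀m))
    have e2 := Order.krullDim_eq_of_orderIso (primeIso hS.le m hmp hlocS hqp hp₀m)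
    show Order.krullDim {P : PrimeSpectrum ↥S' // P.asIdeal ≤ extIdeal m hmp hlocS' p₀}
      = Order.krullDim {P : PrimeSpectrum ↥S // P.asIdeal ≤ q}
    rw [e1, e2, hq'c]
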